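/- arXiv:2006.13543 — 4 statements merged into one kernel-verified Lean document; each statement's English description precedes it below -/
import Mathlib

section
/- Let A ∈ ℝ^{n×n} be a symmetric matrix and B ∈ ℝ^{n×m}. Suppose A is positive definite on the null space of Bᵀ, i.e., cᵀAc > 0 for all nonzero c ∈ ℝⁿ with Bᵀc = 0. Then for any a ∈ ℝⁿ and b ∈ ℝᵐ, there exists a vector w ∈ ℝⁿ such that Aw + Bv = a for some v ∈ ℝᵐ and Bᵀw = b, if and only if b lies in the range of Bᵀ; moreover, such w is unique. -/
open Matrix

private noncomputable def dotLin {n : ℕ} : (Fin n → ℝ) →ₗ[ℝ] Module.Dual ℝ (Fin n → ℝ) where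
  toFun x :=
    { toFun := fun c => c ⬝ᵥ x
      map_add' := fun c d => add_dotProduct c d x
      map_smul' := fun t c => smul_dotProduct t c x }
  map_add' x y := by ext c; simp [dotProduct_add]
  map_smul' t x := by ext c; simp [dotProduct_smul]

private lemma inner_eq_dot {n : ℕ} (x y : EuclideanSpace ℝ (Fin n)) :
    (inner ℝ x y : ℝ) = (x : Fin n → ℝ) ⬝ᵥ (y : Fin n → ℝ) := by
  simp [PiLp.inner_apply, dotProduct, RCLike.inner_apply, mul_comm]

private lemma mem_range_of_orth {n m : ℕ} (B : Matrix (Fin n) (Fin m) ℝ) (r : Fin n → ℝ)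
    (h : ∀ c : Fin n → ℝ, Bᵀ.mulVec c = 0 → c ⬝ᵥ r = 0) :
    ∃ v : Fin m → ℝ, B.mulVec v = r := by
  let e := WithLp.linearEquiv 2 ℝ (Fin n → ℝ)
  let W : Submodule ℝ (EuclideanSpace ℝ (Fin n)) :=
    LinearMap.range (e.symm.toLinearMap ∘ₗ B.mulVecLin)
  have hr : e.symm r ∈ Wᗮᗮ := by
    rw [Submodule.mem_orthogonal]
    intro u hu
    have hu' : Bᵀ.mulVec u = 0 := by
      have h1 : ∀ v : Fin m → ℝ, (B.mulVec v) ⬝ᵥ u = 0 := by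
        intro v
        have h0 := (Submodule.mem_orthogonal W u).mp hu (e.symm (B.mulVec v)) ⟨v, rfl⟩
        have : ((B.mulVec v : Fin n → ℝ) ⬝ᵥ (u : Fin n → ℝ) : ℝ) = 0 := by
          rw [← inner_eq_dot]; exact h0
        exact this
      have h2 : ∀ v : Fin m → ℝ, v ⬝ᵥ (Bᵀ.mulVec u) = 0 := by
        intro v
        have := h1 v
        rw [dotProduct_comm, Matrix.dotProduct_mulVec] at this
        rw [Matrix.mulVec_transpose]
        rwa [dotProduct_comm]
      have := h2 (Bᵀ.mulVec u)
      exact dotProduct_self_eq_zero.mp this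
    have := h u hu'
    rw [inner_eq_dot]; exact this
  rw [Submodule.orthogonal_orthogonal] at hr
  obtain ⟨v, hv⟩ := hr
  exact ⟨v, e.symm.injective hv⟩

theorem stmt0 {n m : ℕ} (A : Matrix (Fin n) (Fin n) ℝ) (B : Matrix (Fin n) (Fin m) ℝ)
    (hA : A.IsSymm)
    (hpd : ∀ c : Fin n → ℝ, c ≠ 0 → Bᵀ.mulVec c = 0 → 0 < c ⬝ᵥ A.mulVec c)
    (a : Fin n → ℝ) (b : Fin m → ℝ) :
    (∃! w : Fin n → ℝ, (∃ v : Fin m → ℝ, A.mulVec w + B.mulVec v = a) ∧ Bᵀ.mulVec w = b)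
      ↔ (∃ w₀ : Fin n → ℝ, Bᵀ.mulVec w₀ = b) := by
  constructor
  · rintro ⟨w, ⟨_, hw⟩, -⟩
    exact ⟨w, hw⟩
  · rintro ⟨w₀, hw₀⟩
    -- uniqueness part, used later
    have huniq : ∀ w w' : Fin n → ℝ,
        ((∃ v, A.mulVec w + B.mulVec v = a) ∧ Bᵀ.mulVec w = b) →
        ((∃ v, A.mulVec w' + B.mulVec v = a) ∧ Bᵀ.mulVec w' = b) → w = w' := by
      rintro w w' ⟨⟨v, hv⟩, hwb⟩ ⟨⟨v', hv'⟩, hwb'⟩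
      by_contra hne
      set d := w - w' with hd
      have hdne : d ≠ 0 := sub_ne_zero.mpr hne
      have hker : Bᵀ.mulVec d = 0 := by
        rw [hd, Matrix.mulVec_sub, hwb, hwb', sub_self]
      have hAd : A.mulVec d = B.mulVec (v' - v) := by
        rw [hd, Matrix.mulVec_sub, Matrix.mulVec_sub]
        have : A.mulVec w - A.mulVec w' = (a - B.mulVec v) - (a - B.mulVec v') := by
          rw [eq_sub_iff_add_eq.mpr hv, eq_sub_iff_add_eq.mpr hv']
        rw [this]; abel
      have : d ⬝ᵥ A.mulVec d = 0 := by
        rw [hAd, Matrix.dotProduct_mulVec, ← Matrix.mulVec_transpose, hker,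
          zero_dotProduct]
      have := hpd d hdne hker
      linarith
    -- existence
    set K : Submodule ℝ (Fin n → ℝ) := LinearMap.ker Bᵀ.mulVecLin with hK
    have hmemK : ∀ c : Fin n → ℝ, c ∈ K ↔ Bᵀ.mulVec c = 0 := by
      intro c; simp [hK, LinearMap.mem_ker, Matrix.mulVec_transpose]
    let φ : K →ₗ[ℝ] Module.Dual ℝ K :=
      K.subtype.dualMap ∘ₗ (dotLin ∘ₗ A.mulVecLin) ∘ₗ K.subtype
    have hφ : ∀ (k c : K), φ k c = (c : Fin n → ℝ) ⬝ᵥ A.mulVec (k : Fin n → ℝ) := by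
      intro k c; rfl
    have hinj : Function.Injective φ := by
      rw [injective_iff_map_eq_zero]
      intro k hk
      by_contra hkne
      have hk0 : (k : Fin n → ℝ) ≠ 0 := fun h => hkne (Subtype.ext h)
      have hpos := hpd k hk0 ((hmemK k).mp k.2)
      have : φ k k = 0 := by rw [hk]; rfl
      rw [hφ] at this
      linarith
    have hsurj : Function.Surjective φ :=
      (LinearMap.injective_iff_surjective_of_finrank_eq_finrank
        (Subspace.dual_finrank_eq).symm).mp hinj
    obtain ⟨k, hk⟩ := hsurj (K.subtype.dualMap (dotLin (a - A.mulVec w₀)))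
    have hkeq : ∀ c : K, (c : Fin n → ℝ) ⬝ᵥ A.mulVec (k : Fin n → ℝ)
        = (c : Fin n → ℝ) ⬝ᵥ (a - A.mulVec w₀) := by
      intro c
      have := congrFun (congrArg DFunLike.coe hk) c
      rw [hφ] at this
      exact this
    set w : Fin n → ℝ := w₀ + (k : Fin n → ℝ) with hw
    have hwb : Bᵀ.mulVec w = b := by
      rw [hw, Matrix.mulVec_add, hw₀, (hmemK k).mp k.2, add_zero]
    have horth : ∀ c : Fin n → ℝ, Bᵀ.mulVec c = 0 → c ⬝ᵥ (a - A.mulVec w) = 0 := by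
      intro c hc
      have := hkeq ⟨c, (hmemK c).mpr hc⟩
      rw [hw, Matrix.mulVec_add, sub_add_eq_sub_sub, dotProduct_sub,
        dotProduct_sub]
      simp only at this
      rw [dotProduct_sub] at this
      linarith
    obtain ⟨v, hv⟩ := mem_range_of_orth B (a - A.mulVec w) horth
    refine ⟨w, ⟨⟨v, ?_⟩, hwb⟩, fun y hy => huniq y w hy ⟨⟨v, ?_⟩, hwb⟩⟩ <;>
      · rw [hv]; abel
end

section
/- Let A ∈ ℝ^{n×n} and B ∈ ℝ^{n×m} be arbitrary matrices such that xᵀAx ≠ 0 for all nonzero x in the null space of Bᵀ. Then for any a ∈ ℝⁿ and b ∈ ℝᵐ with b in the range of Bᵀ, there exists a unique w ∈ ℝⁿ such that Bᵀw = b and Aw − a lies in the range of B. -/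
open Matrix

/-- Identity conversion from plain functions to Euclidean space. -/
def toE {k : ℕ} (x : Fin k → ℝ) : EuclideanSpace ℝ (Fin k) := WithLp.toLp 2 x

lemma aux_saddle {E : Type*} [NormedAddCommGroup E] [InnerProductSpace ℝ E]
    [FiniteDimensional ℝ E] (f : E →ₗ[ℝ] E) (N : Submodule ℝ E)
    (hf : ∀ u ∈ N, (inner ℝ u (f u) : ℝ) = 0 → u = 0) (w₀ c : E) :
    ∃! w : E, w - w₀ ∈ N ∧ f w - c ∈ Nᗮ := by
  classical
  let T : N →ₗ[ℝ] N :=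
    (Submodule.orthogonalProjectionOnto N : E →L[ℝ] N).toLinearMap.comp (f.comp N.subtype)
  have hTinj : Function.Injective T := by
    rw [← LinearMap.ker_eq_bot]
    apply (Submodule.eq_bot_iff _).mpr
    intro u hu
    rw [LinearMap.mem_ker] at hu
    have h2 : Submodule.orthogonalProjectionOnto N (f (u : E)) = 0 := hu
    rw [Submodule.orthogonalProjectionOnto_eq_zero_iff] at h2
    have h3 : (inner ℝ (u : E) (f (u : E)) : ℝ) = 0 :=
      (Submodule.mem_orthogonal N (f (u : E))).mp h2 (u : E) u.2
    exact Subtype.ext (hf (u : E) u.2 h3)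
  have hTsurj : Function.Surjective T :=
    (LinearMap.injective_iff_surjective).mp hTinj
  obtain ⟨u, hu⟩ := hTsurj (Submodule.orthogonalProjectionOnto N (c - f w₀))
  have hproj : ∀ w : E, (f w - c ∈ Nᗮ ↔ Submodule.orthogonalProjectionOnto N (f w - c) = 0) :=
    fun w => (Submodule.orthogonalProjectionOnto_eq_zero_iff).symm
  have hkey : f (w₀ + (u : E)) - c ∈ Nᗮ := by
    rw [hproj]
    have heq : f (w₀ + (u : E)) - c = f (u : E) - (c - f w₀) := by
      rw [map_add]; abel
    rw [heq, map_sub]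
    have : Submodule.orthogonalProjectionOnto N (f (u : E)) = Submodule.orthogonalProjectionOnto N (c - f w₀) := hu
    rw [this, sub_self]
  refine ⟨w₀ + (u : E), ⟨by simp, hkey⟩, ?_⟩
  rintro w ⟨h1, h2⟩
  have hd1 : w - (w₀ + (u : E)) ∈ N := by
    have := N.sub_mem h1 u.2
    rwa [sub_sub] at this
  have hd2 : f (w - (w₀ + (u : E))) ∈ Nᗮ := by
    have := Nᗮ.sub_mem h2 hkey
    have heq : (f w - c) - (f (w₀ + (u : E)) - c) = f (w - (w₀ + (u : E))) := by
      rw [map_sub]; abel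
    rwa [heq] at this
  have h0 : (inner ℝ (w - (w₀ + (u : E))) (f (w - (w₀ + (u : E)))) : ℝ) = 0 :=
    (Submodule.mem_orthogonal N _).mp hd2 _ hd1
  have := hf _ hd1 h0
  rwa [sub_eq_zero] at this

theorem stmt1 {n m : ℕ} (A : Matrix (Fin n) (Fin n) ℝ) (B : Matrix (Fin n) (Fin m) ℝ)
    (hdef : ∀ x : Fin n → ℝ, x ≠ 0 → Bᵀ.mulVec x = 0 → x ⬝ᵥ A.mulVec x ≠ 0)
    (a : Fin n → ℝ) (b : Fin m → ℝ) (hb : ∃ w₀ : Fin n → ℝ, Bᵀ.mulVec w₀ = b) :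
    ∃! w : Fin n → ℝ, Bᵀ.mulVec w = b ∧ ∃ v : Fin m → ℝ, B.mulVec v = A.mulVec w - a := by
  classical
  obtain ⟨w₀, hw₀⟩ := hb
  have hinner : ∀ x y : EuclideanSpace ℝ (Fin n),
      (inner ℝ x y : ℝ) = (x : Fin n → ℝ) ⬝ᵥ (y : Fin n → ℝ) := by
    intro x y; simp [PiLp.inner_apply, dotProduct, mul_comm]
  have hfB : ∀ v : EuclideanSpace ℝ (Fin m),
      Matrix.toEuclideanLin B v = B.mulVec v := fun _ => rfl
  have hfBT : ∀ x : EuclideanSpace ℝ (Fin n),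
      Matrix.toEuclideanLin Bᵀ x = Bᵀ.mulVec x := fun _ => rfl
  have hfA : ∀ x : EuclideanSpace ℝ (Fin n),
      Matrix.toEuclideanLin A x = A.mulVec x := fun _ => rfl
  have hadj : LinearMap.adjoint (Matrix.toEuclideanLin B) = Matrix.toEuclideanLin Bᵀ := by
    rw [← Matrix.toEuclideanLin_conjTranspose_eq_adjoint]
    congr 1
  -- range of B equals orthogonal complement of ker Bᵀ
  have hrange : LinearMap.range (Matrix.toEuclideanLin B) =
      (LinearMap.ker (Matrix.toEuclideanLin Bᵀ))ᗮ := by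
    have h1 : (LinearMap.range (Matrix.toEuclideanLin B))ᗮ =
        LinearMap.ker (Matrix.toEuclideanLin Bᵀ) := by
      ext x
      simp only [Submodule.mem_orthogonal, LinearMap.mem_ker]
      constructor
      · intro h
        have h2 : ∀ v : EuclideanSpace ℝ (Fin m),
            (inner ℝ v (Matrix.toEuclideanLin Bᵀ x) : ℝ) = 0 := by
          intro v
          have hv := h (Matrix.toEuclideanLin B v) ⟨v, rfl⟩
          rw [← hadj, LinearMap.adjoint_inner_right]
          exact hv
        have := h2 (Matrix.toEuclideanLin Bᵀ x)
        rwa [inner_self_eq_zero] at this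
      · rintro h u ⟨v, rfl⟩
        rw [real_inner_comm, ← LinearMap.adjoint_inner_left, hadj, h, inner_zero_left]
    rw [← h1, Submodule.orthogonal_orthogonal]
  have hf : ∀ u ∈ LinearMap.ker (Matrix.toEuclideanLin Bᵀ),
      (inner ℝ u (Matrix.toEuclideanLin A u) : ℝ) = 0 → u = 0 := by
    intro u hu h0
    by_contra hne
    refine hdef u (by simpa using hne) ?_ ?_
    · rw [LinearMap.mem_ker] at hu; simpa [hfBT] using congrArg WithLp.ofLp hu
    · rw [hinner, hfA] at h0; exact h0
  obtain ⟨w, ⟨hw1, hw2⟩, huniq⟩ :=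
    aux_saddle (Matrix.toEuclideanLin A) (LinearMap.ker (Matrix.toEuclideanLin Bᵀ)) hf
      (toE w₀) (toE a)
  -- translation of the two conditions
  have hcond : ∀ w : EuclideanSpace ℝ (Fin n),
      (Bᵀ.mulVec w = b ∧ ∃ v : Fin m → ℝ, B.mulVec v = A.mulVec w - a) ↔
      (w - toE w₀ ∈ LinearMap.ker (Matrix.toEuclideanLin Bᵀ) ∧
        Matrix.toEuclideanLin A w - toE a ∈
          (LinearMap.ker (Matrix.toEuclideanLin Bᵀ))ᗮ) := by
    intro w
    have hsub : Bᵀ.mulVec ((w - toE w₀ : EuclideanSpace ℝ (Fin n)) : Fin n → ℝ) =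
        Bᵀ.mulVec w - Bᵀ.mulVec w₀ := by rw [WithLp.ofLp_sub]; exact Matrix.mulVec_sub _ _ _
    have hAsub : (Matrix.toEuclideanLin A w - toE a : EuclideanSpace ℝ (Fin n)) =
        toE (A.mulVec w - a) := rfl
    constructor
    · rintro ⟨h1, v, h2⟩
      constructor
      · rw [LinearMap.mem_ker]; apply WithLp.ofLp_injective 2; rw [hfBT]
        show Bᵀ.mulVec ((w - toE w₀ : EuclideanSpace ℝ (Fin n)) : Fin n → ℝ) = 0
        rw [hsub, h1, hw₀, sub_self]
      · rw [← hrange]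
        exact ⟨toE v, by rw [hAsub, ← h2]; rfl⟩
    · rintro ⟨h1, h2⟩
      rw [LinearMap.mem_ker] at h1
      have h1 := congrArg WithLp.ofLp h1
      rw [hfBT] at h1
      have h1' : Bᵀ.mulVec w - Bᵀ.mulVec w₀ = 0 := by rw [← hsub]; exact h1
      rw [sub_eq_zero] at h1'
      refine ⟨by rw [h1', hw₀], ?_⟩
      rw [← hrange] at h2
      obtain ⟨v, hv⟩ := h2
      exact ⟨v, by rw [← hfB, hv]; rfl⟩
  refine ⟨w, (hcond w).mpr ⟨hw1, hw2⟩, ?_⟩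
  intro y hy
  exact congrArg WithLp.ofLp (huniq (toE y) ((hcond (toE y)).mp hy))
end

section
/- Let K ∈ ℝ^{n×n} be symmetric and positive definite on N(Pᵀ), P ∈ ℝ^{n×m}, and let M have columns forming a basis of N(Pᵀ). If b ∈ range(Pᵀ), then the (generally overdetermined) linear system MᵀK w = Mᵀ a, Pᵀ w = b has a unique solution w, and this w together with some v solves the saddle point system Kw + Pv = a, Pᵀw = b. -/
open Matrix

private lemma dot_mulVec_left {n k : ℕ} (A : Matrix (Fin n) (Fin k) ℝ) (u : Fin k → ℝ)
    (x : Fin n → ℝ) : (A.mulVec u) ⬝ᵥ x = u ⬝ᵥ Aᵀ.mulVec x := by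
  rw [dotProduct_comm, Matrix.dotProduct_mulVec, Matrix.mulVec_transpose,
    dotProduct_comm]

theorem stmt5 {n m k : ℕ} (K : Matrix (Fin n) (Fin n) ℝ) (P : Matrix (Fin n) (Fin m) ℝ)
    (M : Matrix (Fin n) (Fin k) ℝ)
    (hK : K.IsSymm)
    (hpd : ∀ c : Fin n → ℝ, c ≠ 0 → Pᵀ.mulVec c = 0 → 0 < c ⬝ᵥ K.mulVec c)
    (hMnull : ∀ u : Fin k → ℝ, Pᵀ.mulVec (M.mulVec u) = 0)
    (hMinj : Function.Injective M.mulVec)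
    (hMspan : ∀ c : Fin n → ℝ, Pᵀ.mulVec c = 0 → ∃ u : Fin k → ℝ, M.mulVec u = c)
    (a : Fin n → ℝ) (b : Fin m → ℝ) (hb : ∃ w₀ : Fin n → ℝ, Pᵀ.mulVec w₀ = b) :
    (∃! w : Fin n → ℝ, (Mᵀ * K).mulVec w = Mᵀ.mulVec a ∧ Pᵀ.mulVec w = b) ∧
      ∀ w : Fin n → ℝ, (Mᵀ * K).mulVec w = Mᵀ.mulVec a ∧ Pᵀ.mulVec w = b →
        ∃ v : Fin m → ℝ, K.mulVec w + P.mulVec v = a := by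
  -- N := MᵀKM; its mulVec is injective
  set N : Matrix (Fin k) (Fin k) ℝ := Mᵀ * K * M with hN
  have hNinj : Function.Injective N.mulVecLin := by
    rw [← LinearMap.ker_eq_bot]
    rw [LinearMap.ker_eq_bot']
    intro u hu
    simp only [Matrix.mulVecLin_apply] at hu
    have h1 : N.mulVec u = Mᵀ.mulVec (K.mulVec (M.mulVec u)) := by
      rw [hN, ← Matrix.mulVec_mulVec, ← Matrix.mulVec_mulVec]
    by_contra hu0
    have hMu : M.mulVec u ≠ 0 := by
      intro h
      exact hu0 (hMinj (h.trans (Matrix.mulVec_zero M).symm))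
    have hpos := hpd (M.mulVec u) hMu (hMnull u)
    have : (M.mulVec u) ⬝ᵥ K.mulVec (M.mulVec u) = 0 := by
      rw [dot_mulVec_left, ← h1, hu, dotProduct_zero]
    linarith
  have hNsurj : Function.Surjective N.mulVecLin :=
    (LinearMap.injective_iff_surjective).mp hNinj
  obtain ⟨w₀, hw₀⟩ := hb
  -- existence
  obtain ⟨u₀, hu₀⟩ := hNsurj (Mᵀ.mulVec a - (Mᵀ * K).mulVec w₀)
  simp only [Matrix.mulVecLin_apply] at hu₀
  have hMKMu : ∀ u : Fin k → ℝ, (Mᵀ * K).mulVec (M.mulVec u) = N.mulVec u := by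
    intro u
    rw [hN, Matrix.mulVec_mulVec]
  refine ⟨⟨w₀ + M.mulVec u₀, ⟨?_, ?_⟩, ?_⟩, ?_⟩
  · rw [Matrix.mulVec_add, hMKMu, hu₀]; ring
  · rw [Matrix.mulVec_add, hMnull, hw₀, add_zero]
  · -- uniqueness
    rintro w ⟨hw1, hw2⟩
    have hdiff : Pᵀ.mulVec (w - (w₀ + M.mulVec u₀)) = 0 := by
      rw [Matrix.mulVec_sub, hw2, Matrix.mulVec_add, hMnull, hw₀, add_zero, sub_self]
    obtain ⟨u, hu⟩ := hMspan _ hdiff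
    have : N.mulVec u = 0 := by
      rw [← hMKMu, hu, Matrix.mulVec_sub, hw1, Matrix.mulVec_add, hMKMu, hu₀]
      ring
    have hu0 : u = 0 := by
      apply hNinj
      simpa [Matrix.mulVecLin_apply] using this
    rw [hu0, Matrix.mulVec_zero] at hu
    exact sub_eq_zero.mp hu.symm
  · -- existence of v for the saddle point system
    rintro w ⟨hw1, hw2⟩
    set r : Fin n → ℝ := a - K.mulVec w with hr
    have hMr : Mᵀ.mulVec r = 0 := by
      rw [hr, Matrix.mulVec_sub, Matrix.mulVec_mulVec, hw1, sub_self]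
    set S : Submodule ℝ (Fin n → ℝ) := LinearMap.range P.mulVecLin with hS
    set T : Submodule ℝ (Fin n → ℝ) := LinearMap.ker Pᵀ.mulVecLin with hT
    have hinf : S ⊓ T = ⊥ := by
      rw [eq_bot_iff]
      rintro x ⟨hxS, hxT⟩
      obtain ⟨v, hv⟩ := hxS
      have hxT' : Pᵀ.mulVec x = 0 := hxT
      have : x ⬝ᵥ x = 0 := by
        rw [← hv, Matrix.mulVecLin_apply, dot_mulVec_left]
        rw [Matrix.mulVecLin_apply] at hv
        rw [hv, hxT', dotProduct_zero]
      simpa [Submodule.mem_bot] using (dotProduct_self_eq_zero.mp this)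
    have hrankS : Module.finrank ℝ S = Pᵀ.rank := by
      rw [hS]
      show P.rank = Pᵀ.rank
      rw [Matrix.rank_transpose]
    have hsup : S ⊔ T = ⊤ := by
      apply Submodule.eq_top_of_finrank_eq
      have h1 := Submodule.finrank_sup_add_finrank_inf_eq S T
      rw [hinf, finrank_bot, add_zero] at h1
      have h2 := LinearMap.finrank_range_add_finrank_ker Pᵀ.mulVecLin
      rw [h1, hrankS, ← h2]
      rfl
    have hrST : r ∈ S ⊔ T := by rw [hsup]; exact Submodule.mem_top
    obtain ⟨p, hp, q, hq, hpq⟩ := Submodule.mem_sup.mp hrST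
    obtain ⟨v, hv⟩ := hp
    rw [Matrix.mulVecLin_apply] at hv
    have hqT : Pᵀ.mulVec q = 0 := hq
    obtain ⟨u, hu⟩ := hMspan q hqT
    have hq0 : q = 0 := by
      have hqq : q ⬝ᵥ q = 0 := by
        have h1 : q ⬝ᵥ r = 0 := by
          rw [← hu, dot_mulVec_left, hMr, dotProduct_zero]
        have h2 : q ⬝ᵥ p = 0 := by
          rw [dotProduct_comm, ← hv, dot_mulVec_left, hqT, dotProduct_zero]
        calc q ⬝ᵥ q = q ⬝ᵥ (p + q) - q ⬝ᵥ p := by rw [dotProduct_add]; ring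
        _ = q ⬝ᵥ r - q ⬝ᵥ p := by rw [hpq]
        _ = 0 := by rw [h1, h2, sub_zero]
      exact dotProduct_self_eq_zero.mp hqq
    refine ⟨v, ?_⟩
    have : P.mulVec v = a - K.mulVec w := by
      rw [hv, ← hr, ← hpq, hq0, add_zero]
    rw [this]; ring
end

section
/- Let K: Ω×Ω → ℝ be symmetric and conditionally positive definite with respect to a finite-dimensional function space P on Ω, i.e., for every finite X = {x₁,…,x_n} ⊂ Ω of distinct points, ∑_{i,j} c_i c_j K(x_i,x_j) > 0 for all nonzero c ∈ ℝⁿ with ∑_i c_i p(x_i) = 0 for all p ∈ P. Then for any data (x_j, f_j), j = 1,…,n, with distinct x_j, there exist coefficients c ∈ ℝⁿ and p̃ ∈ P such that σ(x) = ∑_j c_j K(x,x_j) + p̃(x) satisfies σ(x_i) = f_i for i = 1,…,n and ∑_j c_j p(x_j) = 0 for all p ∈ P; moreover the coefficient vector c is unique (even when X is not a determining set for P). -/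
open Finset
open scoped InnerProductSpace

abbrev E18 (n : ℕ) := EuclideanSpace ℝ (Fin n)

section aux
variable {Ω : Type*} (K : Ω → Ω → ℝ) {n : ℕ} (x : Fin n → Ω)

/-- evaluation map at the points `x`. -/
noncomputable def evMap18 : (Ω → ℝ) →ₗ[ℝ] EuclideanSpace ℝ (Fin n) where
  toFun p := WithLp.toLp 2 (fun i => p (x i))
  map_add' _ _ := rfl
  map_smul' _ _ := rfl

/-- the kernel matrix as a linear map. -/
noncomputable def Amap18 : EuclideanSpace ℝ (Fin n) →ₗ[ℝ] EuclideanSpace ℝ (Fin n) where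
  toFun c := WithLp.toLp 2 (fun i => ∑ j, K (x i) (x j) * c j)
  map_add' c d := WithLp.ofLp_injective 2 <| funext fun i => by simp [mul_add, Finset.sum_add_distrib]
  map_smul' r c := WithLp.ofLp_injective 2 <| funext fun i => by
    show ∑ j, K (x i) (x j) * (r * c j) = r * ∑ j, K (x i) (x j) * c j
    rw [Finset.mul_sum]
    exact Finset.sum_congr rfl fun j _ => by ring

@[simp] lemma evMap18_apply (p : Ω → ℝ) (i : Fin n) : evMap18 x p i = p (x i) := rfl

@[simp] lemma Amap18_apply (c : EuclideanSpace ℝ (Fin n)) (i : Fin n) :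
    Amap18 K x c i = ∑ j, K (x i) (x j) * c j := rfl

end aux

theorem stmt18 {Ω : Type*} (K : Ω → Ω → ℝ) (hsymm : ∀ x y, K x y = K y x)
    (P : Submodule ℝ (Ω → ℝ)) (hfin : FiniteDimensional ℝ P)
    (hcpd : ∀ (N : ℕ) (X : Fin N → Ω), Function.Injective X →
      ∀ c : Fin N → ℝ, c ≠ 0 → (∀ p ∈ P, ∑ i, c i * p (X i) = 0) →
        0 < ∑ i, ∑ j, c i * c j * K (X i) (X j))
    (n : ℕ) (x : Fin n → Ω) (hx : Function.Injective x) (f : Fin n → ℝ) :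
    ∃ c : Fin n → ℝ,
      ((∃ ptilde ∈ P,
          (∀ i, (∑ j, c j * K (x i) (x j)) + ptilde (x i) = f i)) ∧
        (∀ p ∈ P, ∑ j, c j * p (x j) = 0)) ∧
      ∀ c' : Fin n → ℝ,
        ((∃ ptilde' ∈ P,
            (∀ i, (∑ j, c' j * K (x i) (x j)) + ptilde' (x i) = f i)) ∧
          (∀ p ∈ P, ∑ j, c' j * p (x j) = 0)) → c' = c := by
  classical
  let A : E18 n →ₗ[ℝ] E18 n := Amap18 K x
  let W : Submodule ℝ (E18 n) := P.map (evMap18 x)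
  -- inner product formula
  have hinner : ∀ a b : E18 n, ⟪a, b⟫_ℝ = ∑ i, a i * b i := fun a b => by
    simp [PiLp.inner_apply, RCLike.inner_apply]
    exact Finset.sum_congr rfl fun i _ => mul_comm _ _
  -- membership in Wᗮ
  have hmemV : ∀ c : E18 n, c ∈ Wᗮ ↔ ∀ p ∈ P, ∑ j, c j * p (x j) = 0 := by
    intro c
    rw [Submodule.mem_orthogonal]
    constructor
    · intro hc p hp
      have := hc (evMap18 x p) ⟨p, hp, rfl⟩
      rw [hinner] at this
      rw [← this]
      exact Finset.sum_congr rfl fun j _ => by simp [mul_comm]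
    · intro h u hu
      obtain ⟨p, hp, rfl⟩ := hu
      rw [hinner, ← h p hp]
      exact Finset.sum_congr rfl fun j _ => by simp [mul_comm]
  -- quadratic form positivity on Wᗮ
  have hquad : ∀ c : E18 n, ⟪A c, c⟫_ℝ = ∑ i, ∑ j, c i * c j * K (x i) (x j) := by
    intro c
    rw [hinner]
    refine Finset.sum_congr rfl fun i _ => ?_
    rw [Amap18_apply, Finset.sum_mul]
    exact Finset.sum_congr rfl fun j _ => by ring
  have hpos : ∀ c : E18 n, c ∈ Wᗮ → c ≠ 0 → 0 < ⟪A c, c⟫_ℝ := by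
    intro c hc hne
    rw [hquad]
    exact hcpd n x hx c (fun h => hne (WithLp.ofLp_injective 2 h)) ((hmemV c).1 hc)
  -- projection facts
  haveI : FiniteDimensional ℝ (E18 n) := by infer_instance
  have hproj : ∀ (v : E18 n) (d : E18 n), d ∈ Wᗮ →
      ⟪(Submodule.orthogonalProjectionOnto Wᗮ v : E18 n), d⟫_ℝ = ⟪v, d⟫_ℝ := by
    intro v d hd
    have h1 : v - (Submodule.orthogonalProjectionOnto Wᗮ v : E18 n) ∈ Wᗮᗮ :=
      Submodule.sub_starProjection_mem_orthogonal (K := Wᗮ) v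
    have h2 : ⟪v - (Submodule.orthogonalProjectionOnto Wᗮ v : E18 n), d⟫_ℝ = 0 := by
      rw [real_inner_comm]
      exact h1 d hd
    rw [inner_sub_left, sub_eq_zero] at h2
    exact h2.symm
  -- T = proj ∘ A on Wᗮ
  let T : Wᗮ →ₗ[ℝ] Wᗮ :=
    (Submodule.orthogonalProjectionOnto Wᗮ).toLinearMap.comp (A.comp Wᗮ.subtype)
  have hT : ∀ c : Wᗮ, (T c : E18 n) = Submodule.orthogonalProjectionOnto Wᗮ (A c.1) := fun c => rfl
  have hTinj : Function.Injective T := by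
    intro c d hcd
    have he : T (c - d) = 0 := by rw [map_sub, hcd, sub_self]
    by_contra hne
    have hne' : (c - d : Wᗮ).1 ≠ 0 := by
      intro h0
      exact hne (sub_eq_zero.1 (Subtype.ext h0) ▸ rfl)
    have := hpos (c - d).1 (c - d).2 hne'
    have hz : ⟪A (c - d).1, (c - d).1⟫_ℝ = 0 := by
      rw [← hproj (A (c - d).1) (c - d).1 (c - d).2, ← hT, he]
      simp [inner_zero_left]
    rw [hz] at this
    exact lt_irrefl 0 this
  have hTsurj : Function.Surjective T :=
    (LinearMap.injective_iff_surjective).1 hTinj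
  -- existence
  let fE : E18 n := WithLp.toLp 2 f
  obtain ⟨c, hc⟩ := hTsurj (Submodule.orthogonalProjectionOnto Wᗮ fE)
  have hmem : A c.1 - fE ∈ Wᗮᗮ := by
    intro d hd
    rw [real_inner_comm, inner_sub_left, sub_eq_zero,
      ← hproj (A c.1) d hd, ← hproj fE d hd, ← hT, hc]
  rw [Submodule.orthogonal_orthogonal] at hmem
  have hmem' : fE - A c.1 ∈ W := by
    have := W.neg_mem hmem
    simpa using this
  obtain ⟨p, hp, hevp⟩ := hmem'
  have hpi : ∀ i, p (x i) = f i - ∑ j, K (x i) (x j) * c.1 j := fun i => congrFun (congrArg WithLp.ofLp hevp) i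
  refine ⟨c.1, ⟨⟨p, hp, fun i => ?_⟩, (hmemV c.1).1 c.2⟩, ?_⟩
  · rw [hpi i]
    have : ∑ j, c.1 j * K (x i) (x j) = ∑ j, K (x i) (x j) * c.1 j :=
      Finset.sum_congr rfl fun j _ => mul_comm _ _
    rw [this]; ring
  -- uniqueness
  · rintro c' ⟨⟨p', hp', hint'⟩, hside'⟩
    by_contra hne
    let c'E : E18 n := WithLp.toLp 2 c'
    set e : E18 n := c'E - c.1 with he
    have hej : ∀ j, e j = c' j - c.1 j := fun j => rfl
    have heV : e ∈ Wᗮ := by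
      rw [hmemV]
      intro q hq
      have h1 := hside' q hq
      have h2 := (hmemV c.1).1 c.2 q hq
      have h3 : ∑ j, e j * q (x j)
          = (∑ j, c' j * q (x j)) - ∑ j, c.1 j * q (x j) := by
        rw [← Finset.sum_sub_distrib]
        exact Finset.sum_congr rfl fun j _ => by rw [hej]; ring
      rw [h3, h1, h2, sub_zero]
    have hAeW : A e ∈ W := by
      have hkey : A e = evMap18 x (p - p') := by
        refine WithLp.ofLp_injective 2 (funext fun i => ?_)
        have h3 : p' (x i) = f i - ∑ j, c' j * K (x i) (x j) := by
          have := hint' i; linarith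
        have h4 : A e i = ∑ j, (c' j - c.1 j) * K (x i) (x j) := by
          show ∑ j, K (x i) (x j) * e j = _
          exact Finset.sum_congr rfl fun j _ => by rw [hej]; ring
        have h5 : ∑ j, (c' j - c.1 j) * K (x i) (x j)
            = (∑ j, c' j * K (x i) (x j)) - ∑ j, K (x i) (x j) * c.1 j := by
          rw [← Finset.sum_sub_distrib]
          exact Finset.sum_congr rfl fun j _ => by ring
        show A e i = p (x i) - p' (x i)
        rw [h4, h5, hpi i, h3]
        ring
      rw [hkey]
      exact ⟨p - p', P.sub_mem hp hp', rfl⟩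
    have hene : e ≠ 0 := by
      intro h0
      exact hne (congrArg WithLp.ofLp (sub_eq_zero.1 h0))
    have hposq := hpos e heV hene
    have hz : ⟪A e, e⟫_ℝ = 0 := heV (A e) hAeW
    rw [hz] at hposq
    exact lt_irrefl 0 hposq
end
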